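/- arXiv:1812.10773 — 2 statements merged into one kernel-verified Lean document; each statement's English description precedes it below -/
import Mathlib

section
/- Let ν ∈ (0,1) and λ, μ > 0, k ≥ 1 an integer. Then it is not true that E_ν(−(λ+kμ)t^ν) = E_ν(−λ t^ν)·E_ν(−kμ t^ν) for all t ≥ 0; i.e., there exists t > 0 with E_ν(−(λ+kμ)t^ν) ≠ E_ν(−λ t^ν)·E_ν(−kμ t^ν). Consequently, if T_A and T_P are random variables with survival functions P(T_A ≥ t) = E_ν(−λ t^ν) and P(T_P ≥ t) = E_ν(−kμ t^ν) and min{T_A,T_P} has survival function E_ν(−(λ+kμ)t^ν) (interarrival, inter-phase and sojourn times of a ν-fractional M/E_k/1 queue), then T_A and T_P are not independent. -/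
open MeasureTheory Real Set ProbabilityTheory

/-- The Mittag-Leffler function `E_ν(z) = Σ_{j=0}^∞ z^j / Γ(νj+1)`. -/
noncomputable def mittagLeffler (ν z : ℝ) : ℝ :=
  ∑' j : ℕ, z ^ j / Real.Gamma (ν * j + 1)


lemma gamma_step {ν x : ℝ} (hν0 : 0 < ν) (hν1 : ν < 1) (hx : 0 < x) :
    x * Real.Gamma x ≤ Real.Gamma (x + ν) * (x + ν) ^ (1 - ν) := by
  have hxν : (0:ℝ) < x + ν := by linarith
  have hxν1 : (0:ℝ) < x + ν + 1 := by linarith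
  have hG1 : 0 < Real.Gamma (x + ν) := Real.Gamma_pos_of_pos hxν
  have hG2 : 0 < Real.Gamma (x + ν + 1) := Real.Gamma_pos_of_pos hxν1
  have hc := Real.convexOn_log_Gamma.2 (mem_Ioi.mpr hxν) (mem_Ioi.mpr hxν1)
    hν0.le (by linarith : (0:ℝ) ≤ 1 - ν) (by ring)
  have hpt : ν • (x + ν) + (1 - ν) • (x + ν + 1) = x + 1 := by
    simp [smul_eq_mul]; ring
  rw [hpt] at hc
  simp only [Function.comp_apply, smul_eq_mul] at hc
  have hadd : Real.Gamma (x + ν + 1) = (x + ν) * Real.Gamma (x + ν) :=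
    Real.Gamma_add_one (ne_of_gt hxν)
  have hadd1 : Real.Gamma (x + 1) = x * Real.Gamma x := Real.Gamma_add_one (ne_of_gt hx)
  have hGx1 : 0 < Real.Gamma (x + 1) := Real.Gamma_pos_of_pos (by linarith)
  have hrpow : (x + ν) ^ (1 - ν) = Real.exp ((1 - ν) * Real.log (x + ν)) := by
    rw [Real.rpow_def_of_pos hxν]; ring_nf
  have : Real.Gamma (x + 1) ≤ Real.Gamma (x + ν) * (x + ν) ^ (1 - ν) := by
    rw [← Real.exp_log hGx1, hrpow, ← Real.exp_log hG1, ← Real.exp_add]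
    apply Real.exp_le_exp.mpr
    calc Real.log (Real.Gamma (x + 1)) ≤ ν * Real.log (Real.Gamma (x+ν)) + (1-ν) * Real.log (Real.Gamma (x+ν+1)) := hc
      _ = Real.log (Real.Gamma (x + ν)) + (1 - ν) * Real.log (x + ν) := by
          rw [hadd, Real.log_mul (ne_of_gt hxν) (ne_of_gt hG1)]; ring
  linarith [hadd1 ▸ this]


lemma ml_summable_abs {ν : ℝ} (hν0 : 0 < ν) (hν1 : ν < 1) (z : ℝ) :
    Summable (fun j : ℕ => |z| ^ j / Real.Gamma (ν * j + 1)) := by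
  apply summable_of_ratio_norm_eventually_le (r := 1/2) (by norm_num)
  obtain ⟨N, hN⟩ := exists_nat_ge ((4 * |z| + 1) ^ (ν⁻¹) / ν)
  rw [Filter.eventually_atTop]
  refine ⟨N, fun j hj => ?_⟩
  have hjn : (0:ℝ) ≤ ν * j := by positivity
  have hx : (0:ℝ) < ν * j + 1 := by positivity
  have hG : 0 < Real.Gamma (ν * j + 1) := Real.Gamma_pos_of_pos hx
  have hG' : 0 < Real.Gamma (ν * (j+1) + 1) := Real.Gamma_pos_of_pos (by positivity)
  set x : ℝ := ν * j + 1 with hxdef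
  have hx1 : (1:ℝ) ≤ x := by simp only [hxdef]; linarith
  have hxM : (4 * |z| + 1) ^ (ν⁻¹) ≤ x := by
    have h1 : (4 * |z| + 1) ^ (ν⁻¹) ≤ ν * N := by
      rw [div_le_iff₀ hν0] at hN; linarith [mul_comm ν (N:ℝ)]
    have h2 : (ν:ℝ) * N ≤ ν * j := by
      apply mul_le_mul_of_nonneg_left _ hν0.le; exact_mod_cast hj
    simp only [hxdef]; linarith
  have hxν : 4 * |z| + 1 ≤ x ^ ν := by
    have hM0 : (0:ℝ) < 4 * |z| + 1 := by positivity
    have := Real.rpow_le_rpow (Real.rpow_nonneg hM0.le _) hxM hν0.le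
    rwa [← Real.rpow_mul hM0.le, inv_mul_cancel₀ (ne_of_gt hν0), Real.rpow_one] at this
  have hstep := gamma_step hν0 hν1 (show (0:ℝ) < x by linarith)
  have hxx : (x + ν) ^ (1 - ν) ≤ 2 * x ^ (1 - ν) := by
    have h2x : x + ν ≤ 2 * x := by linarith
    calc (x + ν) ^ (1-ν) ≤ (2*x) ^ (1-ν) :=
          Real.rpow_le_rpow (by linarith) h2x (by linarith)
      _ = 2 ^ (1-ν) * x ^ (1-ν) := Real.mul_rpow (by norm_num) (by linarith)
      _ ≤ 2 * x ^ (1-ν) := by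
          apply mul_le_mul_of_nonneg_right _ (Real.rpow_nonneg (by linarith) _)
          calc (2:ℝ) ^ (1-ν) ≤ 2 ^ (1:ℝ) :=
                Real.rpow_le_rpow_of_exponent_le (by norm_num) (by linarith)
            _ = 2 := Real.rpow_one 2
  have hxpow : x ^ (1-ν) * x ^ ν = x := by
    rw [← Real.rpow_add (by linarith), sub_add_cancel, Real.rpow_one]
  have hGν : 0 < Real.Gamma (x + ν) := Real.Gamma_pos_of_pos (by linarith)
  have hp : 0 < x ^ ν := Real.rpow_pos_of_pos (by linarith) ν
  have hp' : 0 < x ^ (1-ν) := Real.rpow_pos_of_pos (by linarith) (1-ν)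
  have hGlb : x ^ ν / 2 * Real.Gamma x ≤ Real.Gamma (x + ν) := by
    nlinarith [mul_le_mul_of_nonneg_left hxx hGν.le]
  -- now the ratio bound
  have hxshift : ν * ((j:ℝ)+1) + 1 = x + ν := by simp only [hxdef]; ring
  have key : |z| * Real.Gamma x ≤ 1/2 * Real.Gamma (x + ν) := by
    have h4 : 4 * |z| ≤ x ^ ν := by linarith
    nlinarith [Real.Gamma_pos_of_pos (show (0:ℝ) < x by linarith), abs_nonneg z]
  have hGj : Real.Gamma (ν * ((j+1:ℕ):ℝ) + 1) = Real.Gamma (x + ν) := by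
    rw [← hxshift]; push_cast; ring_nf
  simp only [norm_div, norm_pow, Real.norm_eq_abs, abs_abs, hGj,
    abs_of_pos hG, abs_of_pos hGν]
  rw [div_le_iff₀ hGν, pow_succ]
  have hzj : (0:ℝ) ≤ |z|^j / Real.Gamma x := by positivity
  have h2 : |z|^j / Real.Gamma x * (|z| * Real.Gamma x)
      ≤ |z|^j / Real.Gamma x * (1/2 * Real.Gamma (x+ν)) :=
    mul_le_mul_of_nonneg_left key hzj
  have hGxne : Real.Gamma x ≠ 0 := ne_of_gt hG
  calc |z|^j * |z| = |z|^j / Real.Gamma x * (|z| * Real.Gamma x) := by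
        field_simp
    _ ≤ |z|^j / Real.Gamma x * (1/2 * Real.Gamma (x+ν)) := h2
    _ = 1/2 * (|z|^j / Real.Gamma x) * Real.Gamma (x+ν) := by ring



lemma gamma_arg_pos {ν : ℝ} (hν0 : 0 < ν) (j : ℕ) : 0 < Real.Gamma (ν * j + 1) :=
  Real.Gamma_pos_of_pos (by positivity)

lemma ml_summable {ν : ℝ} (hν0 : 0 < ν) (hν1 : ν < 1) (z : ℝ) :
    Summable (fun j : ℕ => z ^ j / Real.Gamma (ν * j + 1)) := by
  apply Summable.of_abs
  have := ml_summable_abs hν0 hν1 z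
  convert this using 2 with j
  · rfl
  rw [abs_div, abs_pow, abs_of_pos (gamma_arg_pos hν0 j)]

lemma ml_expand {ν : ℝ} (hν0 : 0 < ν) (hν1 : ν < 1) {c : ℝ} (hc : 0 ≤ c) :
    ∃ K : ℝ, 0 ≤ K ∧ ∀ x : ℝ, 0 ≤ x → x ≤ 1 →
      |mittagLeffler ν (-c * x) -
        (1 - c / Real.Gamma (ν+1) * x + c^2 / Real.Gamma (ν*2+1) * x^2)| ≤ K * x^3 := by
  set g : ℕ → ℝ := fun j => c ^ (j+3) / Real.Gamma (ν * ((j+3:ℕ):ℝ) + 1) with hgdef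
  have hg : Summable g := (summable_nat_add_iff 3).2 (ml_summable hν0 hν1 c)
  refine ⟨∑' j, g j, tsum_nonneg (fun j => by
    have := gamma_arg_pos hν0 (j+3)
    positivity), fun x hx0 hx1 => ?_⟩
  set z : ℝ := -c * x with hzdef
  set f : ℕ → ℝ := fun j => z ^ j / Real.Gamma (ν * j + 1) with hfdef
  have hf : Summable f := ml_summable hν0 hν1 z
  have hsplit : ∑' j, f j = (∑ j ∈ Finset.range 3, f j) + ∑' j, f (j + 3) :=
    (Summable.sum_add_tsum_nat_add 3 hf).symm
  have hfin : ∑ j ∈ Finset.range 3, f j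
      = 1 - c / Real.Gamma (ν+1) * x + c^2 / Real.Gamma (ν*2+1) * x^2 := by
    rw [Finset.sum_range_succ, Finset.sum_range_succ, Finset.sum_range_one]
    simp only [hfdef, hzdef]
    push_cast
    rw [mul_zero, zero_add, Real.Gamma_one]
    ring_nf
  have hml : mittagLeffler ν z = ∑' j, f j := rfl
  have habs : ∀ j : ℕ, |f (j + 3)| ≤ g j * x^3 := by
    intro j
    have hG := Real.Gamma_pos_of_pos (show (0:ℝ) < ν * ((j:ℝ)+3) + 1 by positivity)
    have hGn : Real.Gamma (ν * ((j+3:ℕ):ℝ) + 1) = Real.Gamma (ν * ((j:ℝ)+3) + 1) := by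
      norm_num
    have : |f (j+3)| = (c*x)^(j+3) / Real.Gamma (ν * ((j:ℝ)+3) + 1) := by
      simp only [hfdef, hzdef]
      rw [abs_div, abs_pow, hGn, abs_of_pos hG]
      congr 2
      rw [abs_of_nonpos (by nlinarith : -c * x ≤ 0)]; ring
    rw [this, hgdef]
    simp only [hGn]
    rw [div_mul_eq_mul_div, div_le_div_iff₀ hG hG]
    have h1 : (c*x)^(j+3) ≤ c^(j+3) * x^3 := by
      rw [mul_pow]
      apply mul_le_mul_of_nonneg_left _ (by positivity)
      calc x^(j+3) = x^3 * x^j := by ring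
        _ ≤ x^3 * 1 := by
            apply mul_le_mul_of_nonneg_left (pow_le_one₀ hx0 hx1) (by positivity)
        _ = x^3 := mul_one _
    nlinarith [hG]
  have hgx : Summable (fun j => g j * x^3) := hg.mul_right _
  have hf3 : Summable (fun j => f (j+3)) := (summable_nat_add_iff 3).2 hf
  have htail : |∑' j, f (j + 3)| ≤ (∑' j, g j) * x^3 := by
    rw [abs_le]
    constructor
    · have h2 : ∑' j, -(g j * x^3) ≤ ∑' j, f (j+3) :=
        Summable.tsum_le_tsum (fun j => (neg_le_neg (habs j)).trans (neg_abs_le _)) hgx.neg hf3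
      rw [tsum_neg, tsum_mul_right] at h2
      linarith
    · have h1 : ∑' j, f (j+3) ≤ ∑' j, g j * x^3 :=
        Summable.tsum_le_tsum (fun j => (le_abs_self _).trans (habs j)) hf3 hgx
      rw [tsum_mul_right] at h1
      exact h1
  calc |mittagLeffler ν z - (1 - c / Real.Gamma (ν+1) * x + c^2 / Real.Gamma (ν*2+1) * x^2)|
      = |∑' j, f (j + 3)| := by rw [hml, hsplit, hfin]; congr 1; ring
    _ ≤ (∑' j, g j) * x^3 := htail


lemma four_rpow_gt {w : ℝ} (hw0 : 0 < w) (hw1 : w < 1) : 3 < (4:ℝ) ^ w * (3 - 2*w) := by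
  have L4 : Real.log 4 = 2 * Real.log 2 := by
    rw [show (4:ℝ) = 2^(2:ℕ) by norm_num, Real.log_pow]; push_cast; ring
  have hl2 : (0.6931471803 : ℝ) < Real.log 2 := Real.log_two_gt_d9
  have hl2' : Real.log 2 < 0.6931471808 := Real.log_two_lt_d9
  have hL1 : (1.386:ℝ) < Real.log 4 := by rw [L4]; linarith
  have hL2 : Real.log 4 < 1.39 := by rw [L4]; linarith
  rcases le_or_gt w (1/2) with hw | hw
  · have h4w : 1 + w * Real.log 4 < (4:ℝ) ^ w := by
      have h := Real.add_one_lt_exp (x := w * Real.log 4) (by positivity)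
      rw [Real.rpow_def_of_pos (by norm_num : (0:ℝ) < 4), mul_comm (Real.log 4) w]
      linarith
    have hpos : 0 < 3 - 2*w := by linarith
    have hkey : (0:ℝ) ≤ 3 * Real.log 4 - 2 - 2 * Real.log 4 * w := by nlinarith
    have h3 : 3 ≤ (1 + w * Real.log 4) * (3 - 2*w) := by
      nlinarith [mul_nonneg hw0.le hkey]
    nlinarith [mul_lt_mul_of_pos_right h4w hpos]
  · have hsq : (4:ℝ) ^ (1/2 : ℝ) = 2 := by
      rw [show (4:ℝ) = 2^(2:ℕ) by norm_num, ← Real.rpow_natCast 2 2,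
        ← Real.rpow_mul (by norm_num)]
      norm_num
    have h4w : 2 * (1 + (w - 1/2) * Real.log 4) < (4:ℝ) ^ w := by
      have hsplit : (4:ℝ) ^ w = (4:ℝ) ^ (1/2:ℝ) * (4:ℝ) ^ (w - 1/2) := by
        rw [← Real.rpow_add (by norm_num : (0:ℝ) < 4)]
        congr 1; ring
      have hne : (w - 1/2) * Real.log 4 ≠ 0 :=
        ne_of_gt (mul_pos (by linarith) (by linarith))
      have h := Real.add_one_lt_exp hne
      have h4u : 1 + (w - 1/2) * Real.log 4 < (4:ℝ) ^ (w - 1/2) := by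
        rw [Real.rpow_def_of_pos (by norm_num : (0:ℝ) < 4), mul_comm (Real.log 4) (w - 1/2)]
        linarith
      rw [hsplit, hsq]
      nlinarith
    have hpos : 0 < 3 - 2*w := by linarith
    have h3 : 3 ≤ 2 * (1 + (w - 1/2) * Real.log 4) * (3 - 2*w) := by
      nlinarith [mul_nonneg (by linarith : (0:ℝ) ≤ Real.log 4)
          (mul_nonneg (by linarith : (0:ℝ) ≤ w - 1/2) (by linarith : (0:ℝ) ≤ 1 - w)),
        mul_nonneg (by linarith : (0:ℝ) ≤ 1 - w)
          (by linarith : (0:ℝ) ≤ 4 - 2 * Real.log 4)]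
    nlinarith [mul_lt_mul_of_pos_right h4w hpos]


lemma beta_real {ν : ℝ} (hν0 : 0 < ν) :
    Real.Gamma (ν+1) ^ 2
      = Real.Gamma (2*ν+2) * ∫ x in (0:ℝ)..1, x ^ ν * (1-x) ^ ν := by
  have h := Complex.Gamma_mul_Gamma_eq_betaIntegral
    (s := (ν:ℂ)+1) (t := (ν:ℂ)+1) (by simp; linarith) (by simp; linarith)
  rw [Complex.betaIntegral] at h
  have hint : (∫ x in (0:ℝ)..1, (x:ℂ) ^ ((ν:ℂ)+1-1) * ((1:ℂ)-x) ^ ((ν:ℂ)+1-1))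
      = ((∫ x in (0:ℝ)..1, x ^ ν * (1-x) ^ ν : ℝ) : ℂ) := by
    have e1 : (∫ x in (0:ℝ)..1, (x:ℂ) ^ ((ν:ℂ)+1-1) * ((1:ℂ)-x) ^ ((ν:ℂ)+1-1))
        = ∫ x in (0:ℝ)..1, ((x ^ ν * (1-x) ^ ν : ℝ) : ℂ) := by
      apply intervalIntegral.integral_congr
      intro x hx
      rw [uIcc_of_le (by norm_num : (0:ℝ) ≤ 1)] at hx
      obtain ⟨hx0, hx1⟩ := hx
      simp only [add_sub_cancel_right]
      rw [show ((1:ℂ) - (x:ℂ)) = ((1-x:ℝ):ℂ) by push_cast; ring]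
      rw [Complex.ofReal_mul, ← Complex.ofReal_cpow hx0, ← Complex.ofReal_cpow (by linarith)]
    rw [e1]
    exact RCLike.intervalIntegral_ofReal
  rw [hint] at h
  have h2 : ((ν:ℂ)+1) + ((ν:ℂ)+1) = ((2*ν+2 : ℝ) : ℂ) := by push_cast; ring
  rw [h2] at h
  have h3 : ((ν:ℂ)+1) = ((ν+1 : ℝ) : ℂ) := by push_cast; ring
  rw [h3, Complex.Gamma_ofReal, Complex.Gamma_ofReal, ← Complex.ofReal_mul,
    ← Complex.ofReal_mul] at h
  have := Complex.ofReal_inj.mp h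
  rw [← this]; ring

lemma gamma_ineq {ν : ℝ} (hν0 : 0 < ν) (hν1 : ν < 1) :
    Real.Gamma (ν*2+1) < 2 * Real.Gamma (ν+1) ^ 2 := by
  set I : ℝ := ∫ x in (0:ℝ)..1, x ^ ν * (1-x) ^ ν with hI
  have hbeta := beta_real hν0
  -- pointwise bound : x^ν (1-x)^ν ≥ 4^(1-ν) * (x*(1-x)) on [0,1]
  have hcont : Continuous (fun x : ℝ => x ^ ν * (1-x) ^ ν) := by
    apply Continuous.mul
    · exact Real.continuous_rpow_const hν0.le
    · exact (Real.continuous_rpow_const hν0.le).comp (continuous_const.sub continuous_id)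
  have hmono : ∫ x in (0:ℝ)..1, (4:ℝ)^(1-ν) * (x * (1-x))
      ≤ ∫ x in (0:ℝ)..1, x ^ ν * (1-x) ^ ν := by
    apply intervalIntegral.integral_mono_on (by norm_num)
    · exact (Continuous.intervalIntegrable (by continuity) _ _)
    · exact hcont.intervalIntegrable _ _
    · intro x hx
      obtain ⟨hx0, hx1⟩ := hx
      have h1x : (0:ℝ) ≤ 1 - x := by linarith
      rcases eq_or_lt_of_le hx0 with h | h
      · simp [← h, Real.zero_rpow (ne_of_gt hν0)]
      rcases eq_or_lt_of_le hx1 with h' | h'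
      · simp [h', Real.zero_rpow (ne_of_gt hν0)]
      have hy0 : 0 < x * (1-x) := by nlinarith
      have hy4 : x * (1-x) ≤ 1/4 := by nlinarith [sq_nonneg (x - 1/2)]
      rw [← Real.mul_rpow hx0 h1x]
      calc (4:ℝ)^(1-ν) * (x*(1-x)) = (x*(1-x)) * (4:ℝ)^(1-ν) := by ring
        _ ≤ (x*(1-x)) * (x*(1-x)) ^ (ν-1) := by
            apply mul_le_mul_of_nonneg_left _ hy0.le
            have := Real.rpow_le_rpow_of_nonpos hy0 hy4 (by linarith : ν-1 ≤ 0)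
            calc (4:ℝ)^(1-ν) = (1/4 : ℝ)^(ν-1) := by
                  rw [one_div, Real.inv_rpow (by norm_num : (0:ℝ) ≤ 4),
                    ← Real.rpow_neg (by norm_num : (0:ℝ) ≤ 4)]
                  norm_num
              _ ≤ (x*(1-x))^(ν-1) := this
        _ = (x*(1-x)) ^ ν := by
            have e2 : (x*(1-x))^ν = (x*(1-x))^(ν-1) * (x*(1-x)) := by
              rw [← Real.rpow_add_one (ne_of_gt hy0)]; ring_nf
            rw [e2]; ring
  have hcalc : ∫ x in (0:ℝ)..1, (4:ℝ)^(1-ν) * (x * (1-x)) = (4:ℝ)^(1-ν) / 6 := by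
    rw [intervalIntegral.integral_const_mul]
    have e3 : ∫ x in (0:ℝ)..1, x * (1-x) = ∫ x in (0:ℝ)..1, (x - x^2) := by
      apply intervalIntegral.integral_congr
      intro x _; ring
    rw [e3, intervalIntegral.integral_sub (Continuous.intervalIntegrable (by continuity) _ _)
      (Continuous.intervalIntegrable (by continuity) _ _), integral_id, integral_pow]
    norm_num
    ring
  have hIlb : (4:ℝ)^(1-ν)/6 ≤ I := by rw [hI, ← hcalc]; exact hmono
  have h4 := four_rpow_gt (w := 1-ν) (by linarith) (by linarith)
  have h4' : 3 < (4:ℝ)^(1-ν) * (1 + 2*ν) := by nlinarith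
  have hGpos : 0 < Real.Gamma (2*ν+1) := Real.Gamma_pos_of_pos (by linarith)
  have hadd : Real.Gamma (2*ν+2) = (2*ν+1) * Real.Gamma (2*ν+1) := by
    rw [show (2*ν+2 : ℝ) = (2*ν+1) + 1 by ring, Real.Gamma_add_one (by linarith)]
  rw [hadd] at hbeta
  have h21 : Real.Gamma (ν*2+1) = Real.Gamma (2*ν+1) := by ring_nf
  rw [h21]
  have h40 : (0:ℝ) < (4:ℝ)^(1-ν) := Real.rpow_pos_of_pos (by norm_num) _
  nlinarith [mul_le_mul_of_nonneg_left hIlb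
    (by positivity : (0:ℝ) ≤ (2*ν+1) * Real.Gamma (2*ν+1))]



lemma poly_abs_bound {q r x : ℝ} (hq : 0 ≤ q) (hr : 0 ≤ r) (hx0 : 0 ≤ x) (hx1 : x ≤ 1) :
    |1 - q * x + r * x^2| ≤ 1 + q + r := by
  rw [abs_le]
  constructor
  · nlinarith [mul_nonneg hq hx0, mul_nonneg hr (sq_nonneg x),
      mul_nonneg hq (by nlinarith : (0:ℝ) ≤ 1 - x)]
  · nlinarith [mul_nonneg hq hx0, mul_nonneg hr (by nlinarith : (0:ℝ) ≤ 1 - x^2)]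

set_option maxHeartbeats 1000000 in
lemma ml_abstract {GA GB Ka Kb Kc a b x Ea Eb Ec : ℝ}
    (hGA : 0 < GA) (hGB : 0 < GB) (ha : 0 < a) (hb : 0 < b)
    (hKa0 : 0 ≤ Ka) (hKb0 : 0 ≤ Kb) (hKc0 : 0 ≤ Kc)
    (hx0 : 0 < x) (hx1 : x ≤ 1)
    (hua : |Ea - (1 - a/GA*x + a^2/GB*x^2)| ≤ Ka*x^3)
    (hva : |Eb - (1 - b/GA*x + b^2/GB*x^2)| ≤ Kb*x^3)
    (hwa : |Ec - (1 - (a+b)/GA*x + (a+b)^2/GB*x^2)| ≤ Kc*x^3)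
    (heq : Ec = Ea * Eb) :
    a*b*(2/GB - 1/GA^2) * x^2
      ≤ (Kc + (1+a/GA+a^2/GB)*Kb + (1+b/GA+b^2/GB)*Ka + Ka*Kb
          + a*b*(a+b)/(GA*GB) + a^2*b^2/GB^2) * x^3 := by
  obtain ⟨Pa, hPa⟩ : ∃ p : ℝ, p = 1 - a/GA*x + a^2/GB*x^2 := ⟨_, rfl⟩
  obtain ⟨Pb, hPb⟩ : ∃ p : ℝ, p = 1 - b/GA*x + b^2/GB*x^2 := ⟨_, rfl⟩
  obtain ⟨Pc, hPc⟩ : ∃ p : ℝ, p = 1 - (a+b)/GA*x + (a+b)^2/GB*x^2 := ⟨_, rfl⟩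
  obtain ⟨Ma, hMa⟩ : ∃ m : ℝ, m = 1 + a/GA + a^2/GB := ⟨_, rfl⟩
  obtain ⟨Mb, hMb⟩ : ∃ m : ℝ, m = 1 + b/GA + b^2/GB := ⟨_, rfl⟩
  rw [← hPa] at hua
  rw [← hPb] at hva
  rw [← hPc] at hwa
  obtain ⟨u, hu⟩ : ∃ u : ℝ, Ea - Pa = u := ⟨_, rfl⟩
  obtain ⟨v, hv⟩ : ∃ v : ℝ, Eb - Pb = v := ⟨_, rfl⟩
  obtain ⟨w, hw⟩ : ∃ w : ℝ, Ec - Pc = w := ⟨_, rfl⟩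
  rw [hu] at hua; rw [hv] at hva; rw [hw] at hwa
  have hMa0 : 0 ≤ Ma := by rw [hMa]; positivity
  have hMb0 : 0 ≤ Mb := by rw [hMb]; positivity
  have hPaa : |Pa| ≤ Ma := by
    rw [hPa, hMa]
    have := poly_abs_bound (q := a/GA) (r := a^2/GB) (by positivity) (by positivity) hx0.le hx1
    convert this using 3 <;> ring
  have hPba : |Pb| ≤ Mb := by
    rw [hPb, hMb]
    have := poly_abs_bound (q := b/GA) (r := b^2/GB) (by positivity) (by positivity) hx0.le hx1
    convert this using 3 <;> ring
  have hdiff : Pc - Pa * Pb = Pa * v + u * Pb + u * v - w := by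
    have h1 : Ea = Pa + u := by linarith
    have h2 : Eb = Pb + v := by linarith
    have h3 : Ec = Pc + w := by linarith
    rw [h1, h2, h3] at heq
    nlinarith [heq]
  have hx3 : (0:ℝ) < x^3 := by positivity
  have hx63 : x^3 * x^3 ≤ x^3 :=
    mul_le_of_le_one_right hx3.le (pow_le_one₀ hx0.le hx1)
  have habs1 : |Pc - Pa * Pb| ≤ (Kc + Ma*Kb + Mb*Ka + Ka*Kb) * x^3 := by
    rw [hdiff]
    have t1 : |Pa * v + u * Pb + u * v - w| ≤ |Pa * v| + |u * Pb| + |u * v| + |w| := by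
      calc |Pa * v + u * Pb + u * v - w| ≤ |Pa * v + u * Pb + u * v| + |w| := abs_sub _ _
        _ ≤ |Pa * v + u * Pb| + |u * v| + |w| := by linarith [abs_add_le (Pa * v + u * Pb) (u*v)]
        _ ≤ |Pa * v| + |u * Pb| + |u * v| + |w| := by linarith [abs_add_le (Pa * v) (u * Pb)]
    have h1 : |Pa * v| ≤ Ma * (Kb * x^3) := by
      rw [abs_mul]; exact mul_le_mul hPaa hva (abs_nonneg _) hMa0
    have h2 : |u * Pb| ≤ (Ka * x^3) * Mb := by
      rw [abs_mul]; exact mul_le_mul hua hPba (abs_nonneg _) (by positivity)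
    have h3 : |u * v| ≤ (Ka * x^3) * (Kb * x^3) := by
      rw [abs_mul]; exact mul_le_mul hua hva (abs_nonneg _) (by positivity)
    have h4 : (Ka * x^3) * (Kb * x^3) ≤ Ka * Kb * x^3 := by
      have := mul_le_mul_of_nonneg_left hx63 (mul_nonneg hKa0 hKb0)
      nlinarith [this]
    nlinarith [t1, h1, h2, h3, h4, hwa]
  have hident : Pc - Pa * Pb
      = a*b*(2/GB - 1/GA^2) * x^2 + (a*b*(a+b)/(GA*GB)) * x^3 - (a^2*b^2/GB^2) * x^4 := by
    rw [hPa, hPb, hPc]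
    ring
  have hδ : 0 ≤ (a*b*(a+b)/(GA*GB)) * x^3 := by positivity
  have hx43 : (a^2*b^2/GB^2) * x^4 ≤ (a^2*b^2/GB^2) * x^3 := by
    apply mul_le_mul_of_nonneg_left _ (by positivity)
    nlinarith
  have hub := (abs_le.mp habs1).2
  rw [hident] at hub
  rw [← hMa, ← hMb]
  nlinarith [hub, hδ, hx43, hx3]

lemma ml_key {ν : ℝ} (hν0 : 0 < ν) (hν1 : ν < 1) {a b : ℝ} (ha : 0 < a) (hb : 0 < b)
    {s : ℝ} (hs : 0 < s) :
    ∃ x : ℝ, 0 < x ∧ x < s ∧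
      mittagLeffler ν (-(a+b) * x) ≠ mittagLeffler ν (-a * x) * mittagLeffler ν (-b * x) := by
  by_contra hcon
  push_neg at hcon
  have hGA : 0 < Real.Gamma (ν+1) := Real.Gamma_pos_of_pos (by linarith)
  have hGB : 0 < Real.Gamma (ν*2+1) := Real.Gamma_pos_of_pos (by linarith)
  obtain ⟨Ka, hKa0, hKa⟩ := ml_expand hν0 hν1 ha.le
  obtain ⟨Kb, hKb0, hKb⟩ := ml_expand hν0 hν1 hb.le
  obtain ⟨Kc, hKc0, hKc⟩ := ml_expand hν0 hν1 (by linarith : (0:ℝ) ≤ a + b)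
  obtain ⟨ε, hεd⟩ : ∃ e : ℝ,
      e = a*b*(2/Real.Gamma (ν*2+1) - 1/Real.Gamma (ν+1)^2) := ⟨_, rfl⟩
  obtain ⟨C, hCd⟩ : ∃ c : ℝ, c = Kc + (1+a/Real.Gamma (ν+1)+a^2/Real.Gamma (ν*2+1))*Kb
      + (1+b/Real.Gamma (ν+1)+b^2/Real.Gamma (ν*2+1))*Ka + Ka*Kb
      + a*b*(a+b)/(Real.Gamma (ν+1)*Real.Gamma (ν*2+1))
      + a^2*b^2/Real.Gamma (ν*2+1)^2 := ⟨_, rfl⟩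
  have hε : 0 < ε := by
    rw [hεd]
    have h := gamma_ineq hν0 hν1
    have h2 : 0 < 2/Real.Gamma (ν*2+1) - 1/Real.Gamma (ν+1)^2 := by
      rw [sub_pos, div_lt_div_iff₀ (by positivity) hGB]
      nlinarith
    positivity
  have hC0 : 0 ≤ C := by rw [hCd]; positivity
  have main : ∀ x : ℝ, 0 < x → x < s → x ≤ 1 → ε * x^2 ≤ C * x^3 := by
    intro x hx0 hxs hx1
    rw [hεd, hCd]
    exact ml_abstract hGA hGB ha hb hKa0 hKb0 hKc0 hx0 hx1
      (hKa x hx0.le hx1) (hKb x hx0.le hx1) (hKc x hx0.le hx1) (hcon x hx0 hxs)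
  set x1 : ℝ := min (min s 1) (ε/(C+1)) / 2 with hx1d
  have hmin : 0 < min (min s 1) (ε/(C+1)) :=
    lt_min (lt_min hs one_pos) (by positivity)
  have hx1pos : 0 < x1 := by rw [hx1d]; positivity
  have hx1s : x1 < s := by
    have h1 : min (min s 1) (ε/(C+1)) ≤ s := (min_le_left _ _).trans (min_le_left _ _)
    rw [hx1d]; linarith
  have hx11 : x1 ≤ 1 := by
    have h1 : min (min s 1) (ε/(C+1)) ≤ 1 := (min_le_left _ _).trans (min_le_right _ _)
    rw [hx1d]; linarith
  have hm := main x1 hx1pos hx1s hx11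
  have hlt : C * x1 < ε := by
    have h1 : x1 ≤ ε/(C+1) := by
      have := (min_le_right (min s 1) (ε/(C+1)))
      rw [hx1d]; linarith
    have h2 : C * x1 ≤ C * (ε/(C+1)) := mul_le_mul_of_nonneg_left h1 hC0
    have h3 : C * (ε/(C+1)) < ε := by
      rw [mul_div_assoc']
      rw [div_lt_iff₀ (by linarith : (0:ℝ) < C+1)]
      nlinarith
    linarith
  nlinarith [mul_lt_mul_of_pos_right hlt (pow_pos hx1pos 2), hm]

lemma ml_pos {ν : ℝ} (hν0 : 0 < ν) (hν1 : ν < 1) {c : ℝ} (hc : 0 < c) :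
    ∃ δ : ℝ, 0 < δ ∧ δ ≤ 1 ∧ ∀ x : ℝ, 0 < x → x < δ → 0 < mittagLeffler ν (-c * x) := by
  obtain ⟨K, hK0, hK⟩ := ml_expand hν0 hν1 hc.le
  have hGA : 0 < Real.Gamma (ν+1) := Real.Gamma_pos_of_pos (by linarith)
  have hGB : 0 < Real.Gamma (ν*2+1) := Real.Gamma_pos_of_pos (by linarith)
  have hq0 : 0 < c/Real.Gamma (ν+1) + K + 1 := by positivity
  refine ⟨min 1 (1/(c/Real.Gamma (ν+1) + K + 1)), lt_min one_pos (by positivity),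
    min_le_left _ _, fun x hx0 hxδ => ?_⟩
  have hx1 : x ≤ 1 := ((lt_min_iff.mp hxδ).1).le
  have hxq : x < 1/(c/Real.Gamma (ν+1) + K + 1) := (lt_min_iff.mp hxδ).2
  have h := (abs_le.mp (hK x hx0.le hx1)).1
  have hsq : 0 ≤ c^2/Real.Gamma (ν*2+1) * x^2 := by positivity
  have hx3x : x^3 ≤ x := by nlinarith
  have hqx : (c/Real.Gamma (ν+1) + K + 1) * x < 1 := by
    rw [← lt_div_iff₀' hq0]; exact hxq
  have hKx : K * x^3 ≤ K * x := mul_le_mul_of_nonneg_left hx3x hK0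
  nlinarith [mul_pos (div_pos hc hGA) hx0]

/-- for ν ∈ (0,1) the multiplicative identity for the Mittag-Leffler function
fails at some t > 0; consequently interarrival and inter-phase times of a ν-fractional
M/E_k/1 queue are not independent. -/
theorem stmt6 (lam mu ν : ℝ) (k : ℕ) (hl : 0 < lam) (hm : 0 < mu) (hk : 1 ≤ k)
    (hν : ν ∈ Set.Ioo (0:ℝ) 1) :
    (∃ t : ℝ, 0 < t ∧
      mittagLeffler ν (-(lam + k * mu) * t ^ ν)
        ≠ mittagLeffler ν (-lam * t ^ ν) * mittagLeffler ν (-(k * mu) * t ^ ν)) ∧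
    (∀ (Ω : Type) (_ : MeasurableSpace Ω) (P : Measure Ω), IsProbabilityMeasure P →
      ∀ (TA TP : Ω → ℝ), Measurable TA → Measurable TP →
      (∀ t, 0 ≤ t → P {ω | t ≤ TA ω} = ENNReal.ofReal (mittagLeffler ν (-lam * t ^ ν))) →
      (∀ t, 0 ≤ t → P {ω | t ≤ TP ω} = ENNReal.ofReal (mittagLeffler ν (-(k * mu) * t ^ ν))) →
      (∀ t, 0 ≤ t → P {ω | t ≤ min (TA ω) (TP ω)}
          = ENNReal.ofReal (mittagLeffler ν (-(lam + k * mu) * t ^ ν))) →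
      ¬ IndepFun TA TP P) := by
  obtain ⟨hν0, hν1⟩ := hν
  have hk1 : (1:ℝ) ≤ (k:ℝ) := by exact_mod_cast hk
  have hb : (0:ℝ) < (k:ℝ) * mu := by nlinarith
  constructor
  · obtain ⟨x, hx0, hxs, hne⟩ := ml_key hν0 hν1 hl hb one_pos
    refine ⟨x ^ (ν⁻¹), Real.rpow_pos_of_pos hx0 _, ?_⟩
    have ht : (x ^ (ν⁻¹)) ^ ν = x := by
      rw [← Real.rpow_mul hx0.le, inv_mul_cancel₀ (ne_of_gt hν0), Real.rpow_one]
    rw [ht]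
    exact hne
  · intro Ω mΩ P hP TA TP hTA hTP hA hB hAB hInd
    obtain ⟨δa, hδa0, hδa1, hδa⟩ := ml_pos hν0 hν1 hl
    obtain ⟨δb, hδb0, hδb1, hδb⟩ := ml_pos hν0 hν1 hb
    obtain ⟨x, hx0, hxs, hne⟩ :=
      ml_key hν0 hν1 hl hb (lt_min hδa0 hδb0 : (0:ℝ) < min δa δb)
    set t := x ^ (ν⁻¹) with htd
    have ht0 : 0 < t := Real.rpow_pos_of_pos hx0 _
    have ht : t ^ ν = x := by
      rw [htd, ← Real.rpow_mul hx0.le, inv_mul_cancel₀ (ne_of_gt hν0), Real.rpow_one]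
    have hfa : 0 < mittagLeffler ν (-lam * x) :=
      hδa x hx0 (hxs.trans_le (min_le_left _ _))
    have hfb : 0 < mittagLeffler ν (-((k:ℝ)*mu) * x) :=
      hδb x hx0 (hxs.trans_le (min_le_right _ _))
    have hseq : {ω | t ≤ min (TA ω) (TP ω)} = TA ⁻¹' (Ici t) ∩ TP ⁻¹' (Ici t) := by
      ext ω
      simp [Set.mem_Ici, le_min_iff, Set.mem_preimage]
    have hsA : {ω | t ≤ TA ω} = TA ⁻¹' (Ici t) := rfl
    have hsB : {ω | t ≤ TP ω} = TP ⁻¹' (Ici t) := rfl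
    have hmul := hInd.measure_inter_preimage_eq_mul (Ici t) (Ici t)
      measurableSet_Ici measurableSet_Ici
    have h1 := hAB t ht0.le
    have h2 := hA t ht0.le
    have h3 := hB t ht0.le
    rw [ht] at h1 h2 h3
    rw [hseq, hmul, ← hsA, ← hsB, h2, h3] at h1
    rw [← ENNReal.ofReal_mul hfa.le] at h1
    have hprodpos : 0 < mittagLeffler ν (-lam*x) * mittagLeffler ν (-((k:ℝ)*mu)*x) :=
      mul_pos hfa hfb
    have hfab : 0 < mittagLeffler ν (-(lam + (k:ℝ)*mu) * x) := by
      by_contra hle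
      push_neg at hle
      rw [ENNReal.ofReal_eq_zero.mpr hle] at h1
      exact (ENNReal.ofReal_pos.mpr hprodpos).ne' h1
    exact hne ((ENNReal.ofReal_eq_ofReal_iff hprodpos.le hfab.le).mp h1).symm
end

section
/- Let ν ∈ (0,1) and λ > 0. On a probability space, let X be an exponential random variable with rate λ and Z a nonnegative random variable independent of X satisfying E[e^{−vZ}] = e^{−v^ν} for all v > 0 (i.e., Z is distributed as a ν-stable subordinator at time 1). Then for every t ≥ 0, P(X^{1/ν} Z > t) = E_ν(−λ t^ν); that is, X^{1/ν} Z is a Mittag-Leffler random variable with fractional index ν and parameter λ. -/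
open MeasureTheory Real Set ProbabilityTheory Filter Topology

section aux

lemma expRemainder (n : ℕ) : ∀ y : ℝ, 0 ≤ y →
    |Real.exp (-y) - ∑ j ∈ Finset.range (n+1), (-y)^j / (Nat.factorial j : ℝ)|
      ≤ y^(n+1) / (Nat.factorial (n+1) : ℝ) := by
  induction n with
  | zero =>
    intro y hy
    simp only [Finset.range_one, Finset.sum_singleton, pow_zero, Nat.factorial_zero,
      Nat.cast_one, div_one, pow_one, Nat.factorial_one, zero_add, Nat.cast_one]
    have h1 : Real.exp (-y) ≤ 1 := Real.exp_le_one_iff.mpr (by linarith)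
    have h2 : 1 - y ≤ Real.exp (-y) := by
      have := Real.add_one_le_exp (-y); linarith
    rw [abs_le]; constructor <;> linarith
  | succ n ih =>
    intro y hy
    -- derivative fact
    have hderiv : ∀ u : ℝ, HasDerivAt
        (fun w => Real.exp (-w) - ∑ j ∈ Finset.range (n+2), (-w)^j / (Nat.factorial j : ℝ))
        (-(Real.exp (-u) - ∑ j ∈ Finset.range (n+1), (-u)^j / (Nat.factorial j : ℝ))) u := by
      intro u
      have hexp : HasDerivAt (fun w : ℝ => Real.exp (-w)) (-Real.exp (-u)) u := by
        simpa [Function.comp_def] using ((Real.hasDerivAt_exp (-u)).comp u (hasDerivAt_neg u))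
      have hsum : HasDerivAt (fun w : ℝ => ∑ j ∈ Finset.range (n+2), (-w)^j / (Nat.factorial j : ℝ))
          (∑ j ∈ Finset.range (n+2), ((j : ℝ) * (-u)^(j-1) * (-1)) / (Nat.factorial j : ℝ)) u := by
        apply HasDerivAt.fun_sum
        intro j _
        have h1 : HasDerivAt (fun w : ℝ => (-w)^j) ((j : ℝ) * (-u)^(j-1) * (-1)) u := by
          simpa [Function.comp_def] using ((hasDerivAt_pow j (-u)).comp u (hasDerivAt_neg u))
        exact h1.div_const _
      have hkey : (∑ j ∈ Finset.range (n+2), ((j : ℝ) * (-u)^(j-1) * (-1)) / (Nat.factorial j : ℝ))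
          = -(∑ j ∈ Finset.range (n+1), (-u)^j / (Nat.factorial j : ℝ)) := by
        rw [Finset.sum_range_succ' (fun j => ((j : ℝ) * (-u)^(j-1) * (-1)) / (Nat.factorial j : ℝ)) (n+1)]
        simp only [Nat.cast_zero, zero_mul, Nat.factorial_zero, Nat.cast_one,
          Nat.add_sub_cancel, zero_mul, zero_div, add_zero]
        rw [← Finset.sum_neg_distrib]
        apply Finset.sum_congr rfl
        intro i _
        have : (Nat.factorial (i+1) : ℝ) = (i+1) * (Nat.factorial i : ℝ) := by
          rw [Nat.factorial_succ]; push_cast; ring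
        rw [this]
        push_cast
        have hi : (Nat.factorial i : ℝ) ≠ 0 := Nat.cast_ne_zero.mpr (Nat.factorial_ne_zero i)
        field_simp
      rw [hkey] at hsum
      exact (hexp.sub hsum).congr_deriv (by ring)
    -- FTC
    have hcont : Continuous (fun u : ℝ =>
        -(Real.exp (-u) - ∑ j ∈ Finset.range (n+1), (-u)^j / (Nat.factorial j : ℝ))) := by
      continuity
    have hftc := intervalIntegral.integral_eq_sub_of_hasDerivAt
      (fun u _ => hderiv u) (hcont.intervalIntegrable 0 y)
    have hzero : Real.exp (-(0:ℝ)) - ∑ j ∈ Finset.range (n+2), (-(0:ℝ))^j / (Nat.factorial j : ℝ) = 0 := by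
      rw [Finset.sum_eq_single 0]
      · simp
      · intro b _ hb; simp [zero_pow hb]
      · simp
    rw [hzero, sub_zero] at hftc
    -- bound the integral
    have hb1 : |∫ u in (0:ℝ)..y, -(Real.exp (-u) - ∑ j ∈ Finset.range (n+1), (-u)^j / (Nat.factorial j : ℝ))|
        ≤ ∫ u in (0:ℝ)..y, u^(n+1) / (Nat.factorial (n+1) : ℝ) := by
      refine (intervalIntegral.abs_integral_le_integral_abs hy).trans ?_
      apply intervalIntegral.integral_mono_on hy
      · exact (hcont.abs).intervalIntegrable 0 y
      · exact ((continuous_pow (n+1)).div_const _).intervalIntegrable 0 y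
      · intro u hu
        rw [abs_neg]
        exact ih u hu.1
    have hb2 : ∫ u in (0:ℝ)..y, u^(n+1) / (Nat.factorial (n+1) : ℝ) = y^(n+2) / (Nat.factorial (n+2) : ℝ) := by
      rw [intervalIntegral.integral_div, integral_pow]
      have : (Nat.factorial (n+2) : ℝ) = (n+2) * (Nat.factorial (n+1) : ℝ) := by
        rw [show n+2 = (n+1)+1 from rfl, Nat.factorial_succ]; push_cast; ring
      rw [this, zero_pow (by omega : n+1+1 ≠ 0), sub_zero, div_div]
      push_cast
      ring
    calc |Real.exp (-y) - ∑ j ∈ Finset.range (n+1+1), (-y)^j / (Nat.factorial j : ℝ)|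
        = |∫ u in (0:ℝ)..y, -(Real.exp (-u) - ∑ j ∈ Finset.range (n+1), (-u)^j / (Nat.factorial j : ℝ))| := by
          rw [← hftc]
      _ ≤ y^(n+2) / (Nat.factorial (n+2) : ℝ) := by rw [← hb2]; exact hb1


variable {Ω : Type*} [MeasurableSpace Ω] (P : Measure Ω) [IsProbabilityMeasure P]
  (ν : ℝ) (Z : Ω → ℝ)

lemma exp_neg_integrable (hZ : Measurable Z) (hZpos : ∀ ω, 0 ≤ Z ω) (v : ℝ) (hv : 0 ≤ v) :
    Integrable (fun ω => Real.exp (-(v * Z ω))) P := by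
  apply Integrable.mono' (integrable_const (1:ℝ))
    ((hZ.const_mul v).neg.exp.aestronglyMeasurable)
  filter_upwards with ω
  rw [Real.norm_eq_abs, abs_of_pos (Real.exp_pos _)]
  exact Real.exp_le_one_iff.mpr (by show -(v * Z ω) ≤ 0; nlinarith [hZpos ω])

lemma Z_pos_ae (hν : ν ∈ Set.Ioo (0:ℝ) 1) (hZ : Measurable Z) (hZpos : ∀ ω, 0 ≤ Z ω)
    (hZlap : ∀ v, 0 < v → ∫ ω, Real.exp (-v * Z ω) ∂P = Real.exp (-(v ^ ν))) :
    ∀ᵐ ω ∂P, 0 < Z ω := by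
  have key : ∀ n : ℕ, P {ω | Z ω = 0} ≤ ENNReal.ofReal (Real.exp (-(((n:ℝ)+1) ^ ν))) := by
    intro n
    set v : ℝ := (n:ℝ)+1 with hv
    have hv0 : (0:ℝ) < v := by positivity
    have hmeas : MeasurableSet {ω | Z ω = 0} := hZ (measurableSet_singleton 0)
    calc P {ω | Z ω = 0} = ∫⁻ ω in {ω | Z ω = 0}, 1 ∂P := by rw [setLIntegral_one]
      _ = ∫⁻ ω in {ω | Z ω = 0}, ENNReal.ofReal (Real.exp (-(v * Z ω))) ∂P := by
          refine setLIntegral_congr_fun hmeas (fun ω hω => ?_)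
          rw [hω, mul_zero, neg_zero, Real.exp_zero, ENNReal.ofReal_one]
      _ ≤ ∫⁻ ω, ENNReal.ofReal (Real.exp (-(v * Z ω))) ∂P := setLIntegral_le_lintegral _ _
      _ = ENNReal.ofReal (∫ ω, Real.exp (-(v * Z ω)) ∂P) :=
          (ofReal_integral_eq_lintegral_ofReal (exp_neg_integrable P Z hZ hZpos v hv0.le)
            (Filter.Eventually.of_forall fun ω => (Real.exp_pos _).le)).symm
      _ = ENNReal.ofReal (Real.exp (-(v ^ ν))) := by
          rw [show (∫ ω, Real.exp (-(v * Z ω)) ∂P) = ∫ ω, Real.exp (-v * Z ω) ∂P by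
            simp_rw [neg_mul], hZlap v hv0]
  have hlim : Tendsto (fun n : ℕ => ENNReal.ofReal (Real.exp (-(((n:ℝ)+1) ^ ν)))) atTop (𝓝 0) := by
    rw [← ENNReal.ofReal_zero]
    apply ENNReal.tendsto_ofReal
    have h1 : Tendsto (fun n : ℕ => ((n:ℝ)+1) ^ ν) atTop atTop :=
      (tendsto_rpow_atTop hν.1).comp (tendsto_atTop_add_const_right _ 1 tendsto_natCast_atTop_atTop)
    exact Real.tendsto_exp_atBot.comp (tendsto_neg_atBot_iff.mpr h1)
  have h0 : P {ω | Z ω = 0} = 0 := le_antisymm (ge_of_tendsto' hlim key) zero_le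
  rw [ae_iff]
  have hset : {ω | ¬ 0 < Z ω} = {ω | Z ω = 0} := by
    ext ω
    simp only [mem_setOf_eq, not_lt]
    exact ⟨fun h => le_antisymm h (hZpos ω), fun h => le_of_eq h⟩
  rw [hset, h0]

lemma moment_lintegral (hν : ν ∈ Set.Ioo (0:ℝ) 1) (hZ : Measurable Z) (hZpos : ∀ ω, 0 ≤ Z ω)
    (hZlap : ∀ v, 0 < v → ∫ ω, Real.exp (-v * Z ω) ∂P = Real.exp (-(v ^ ν)))
    (s : ℝ) (hs : 0 < s) :
    ∫⁻ ω, ENNReal.ofReal (Z ω ^ (-s)) ∂P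
      = ENNReal.ofReal (Real.Gamma (s/ν + 1) / Real.Gamma (s + 1)) := by
  obtain ⟨hν0, hν1⟩ := hν
  have hΓs : 0 < Real.Gamma s := Real.Gamma_pos_of_pos hs
  have haeZ := Z_pos_ae P ν Z ⟨hν0, hν1⟩ hZ hZpos hZlap
  have hFmeas : Measurable (Function.uncurry fun (ω : Ω) (v : ℝ) =>
      ENNReal.ofReal (v ^ (s-1) * Real.exp (-(v * Z ω)))) := by
    apply ENNReal.measurable_ofReal.comp
    have h1 : Measurable fun p : Ω × ℝ => p.2 ^ (s-1) := by fun_prop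
    have h2 : Measurable fun p : Ω × ℝ => Real.exp (-(p.2 * Z p.1)) := by
      apply Real.measurable_exp.comp
      exact (measurable_snd.mul (hZ.comp measurable_fst)).neg
    exact h1.mul h2
  -- integrability of the ν-Gamma-type integrand
  have hIν : IntegrableOn (fun v : ℝ => v ^ (s-1) * Real.exp (-(v ^ ν))) (Ioi 0) volume := by
    have hf : IntegrableOn (fun u : ℝ => u ^ (s/ν - 1) * Real.exp (-u)) (Ioi 0) volume := by
      refine (Real.GammaIntegral_convergent (div_pos hs hν0)).congr_fun
        (fun u hu => mul_comm _ _) measurableSet_Ioi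
    have h := (integrableOn_Ioi_comp_rpow_iff' (fun u => u ^ (s/ν - 1) * Real.exp (-u))
      (ne_of_gt hν0)).mpr hf
    refine h.congr_fun (fun x hx => ?_) measurableSet_Ioi
    have hx0 : (0:ℝ) < x := hx
    dsimp only
    rw [smul_eq_mul, ← Real.rpow_mul hx0.le, ← mul_assoc, ← Real.rpow_add hx0]
    congr 2
    field_simp
    ring

  -- pointwise representation of z ^ (-s)
  have hpoint : ∀ᵐ ω ∂P, ENNReal.ofReal (Z ω ^ (-s))
      = ENNReal.ofReal (1 / Real.Gamma s)
        * ∫⁻ v in Ioi 0, ENNReal.ofReal (v ^ (s-1) * Real.exp (-(v * Z ω))) ∂volume := by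
    filter_upwards [haeZ] with ω hz
    set z := Z ω with hzdef
    have hint : IntegrableOn (fun v : ℝ => v ^ (s-1) * Real.exp (-(z * v))) (Ioi 0) volume := by
      refine (integrableOn_rpow_mul_exp_neg_mul_rpow (by linarith : (-1:ℝ) < s-1)
        one_pos hz).congr_fun (fun v hv => ?_) measurableSet_Ioi
      dsimp only
      rw [Real.rpow_one, neg_mul]
    have hval : ∫ v in Ioi 0, v ^ (s-1) * Real.exp (-(z * v)) ∂volume
        = (1/z) ^ s * Real.Gamma s := integral_rpow_mul_exp_neg_mul_Ioi hs hz
    have hlin : ∫⁻ v in Ioi 0, ENNReal.ofReal (v ^ (s-1) * Real.exp (-(v * z))) ∂volume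
        = ENNReal.ofReal ((1/z) ^ s * Real.Gamma s) := by
      calc ∫⁻ v in Ioi 0, ENNReal.ofReal (v ^ (s-1) * Real.exp (-(v * z))) ∂volume
          = ∫⁻ v in Ioi 0, ENNReal.ofReal (v ^ (s-1) * Real.exp (-(z * v))) ∂volume :=
            setLIntegral_congr_fun measurableSet_Ioi (
              fun v hv => by rw [mul_comm v z])
        _ = ENNReal.ofReal (∫ v in Ioi 0, v ^ (s-1) * Real.exp (-(z * v)) ∂volume) :=
            (ofReal_integral_eq_lintegral_ofReal hint
              ((ae_restrict_iff' measurableSet_Ioi).mpr (Filter.Eventually.of_forall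
                fun v hv => by
                  have hv0 : (0:ℝ) < v := hv
                  positivity))).symm
        _ = ENNReal.ofReal ((1/z) ^ s * Real.Gamma s) := by rw [hval]
    rw [hlin, ← ENNReal.ofReal_mul (by positivity)]
    congr 1
    rw [one_div z, Real.inv_rpow hz.le, ← Real.rpow_neg hz.le]
    field_simp
  calc ∫⁻ ω, ENNReal.ofReal (Z ω ^ (-s)) ∂P
      = ∫⁻ ω, ENNReal.ofReal (1 / Real.Gamma s)
          * ∫⁻ v in Ioi 0, ENNReal.ofReal (v ^ (s-1) * Real.exp (-(v * Z ω))) ∂volume ∂P :=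
        lintegral_congr_ae hpoint
    _ = ENNReal.ofReal (1 / Real.Gamma s)
          * ∫⁻ ω, ∫⁻ v in Ioi 0, ENNReal.ofReal (v ^ (s-1) * Real.exp (-(v * Z ω))) ∂volume ∂P :=
        lintegral_const_mul' _ _ ENNReal.ofReal_ne_top
    _ = ENNReal.ofReal (1 / Real.Gamma s)
          * ∫⁻ v in Ioi 0, ∫⁻ ω, ENNReal.ofReal (v ^ (s-1) * Real.exp (-(v * Z ω))) ∂P ∂volume := by
        rw [lintegral_lintegral_swap hFmeas.aemeasurable]
    _ = ENNReal.ofReal (1 / Real.Gamma s)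
          * ∫⁻ v in Ioi 0, ENNReal.ofReal (v ^ (s-1) * Real.exp (-(v ^ ν))) ∂volume := by
        congr 1
        refine setLIntegral_congr_fun measurableSet_Ioi (
          fun v hv => ?_)
        have hv0 : (0:ℝ) < v := hv
        have hrn : (0:ℝ) ≤ v ^ (s-1) := Real.rpow_nonneg hv0.le _
        calc ∫⁻ ω, ENNReal.ofReal (v ^ (s-1) * Real.exp (-(v * Z ω))) ∂P
            = ∫⁻ ω, ENNReal.ofReal (v ^ (s-1)) * ENNReal.ofReal (Real.exp (-(v * Z ω))) ∂P := by
              simp_rw [ENNReal.ofReal_mul hrn]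
          _ = ENNReal.ofReal (v ^ (s-1)) * ∫⁻ ω, ENNReal.ofReal (Real.exp (-(v * Z ω))) ∂P :=
              lintegral_const_mul' _ _ ENNReal.ofReal_ne_top
          _ = ENNReal.ofReal (v ^ (s-1) * Real.exp (-(v ^ ν))) := by
              rw [← ofReal_integral_eq_lintegral_ofReal
                  (exp_neg_integrable P Z hZ hZpos v hv0.le)
                  (Filter.Eventually.of_forall fun ω => (Real.exp_pos _).le),
                show (∫ ω, Real.exp (-(v * Z ω)) ∂P) = ∫ ω, Real.exp (-v * Z ω) ∂P by
                  simp_rw [neg_mul],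
                hZlap v hv0, ← ENNReal.ofReal_mul hrn]
    _ = ENNReal.ofReal (1 / Real.Gamma s) * ENNReal.ofReal ((1/ν) * Real.Gamma (s/ν)) := by
        congr 1
        rw [← ofReal_integral_eq_lintegral_ofReal hIν]
        · congr 1
          have := integral_rpow_mul_exp_neg_rpow hν0 (by linarith : (-1:ℝ) < s-1)
          rw [show s - 1 + 1 = s by ring] at this
          simpa using this
        · refine (ae_restrict_iff' measurableSet_Ioi).mpr (Filter.Eventually.of_forall
            fun v hv => ?_)
          have hv0 : (0:ℝ) < v := hv
          positivity
    _ = ENNReal.ofReal (Real.Gamma (s/ν + 1) / Real.Gamma (s + 1)) := by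
        rw [← ENNReal.ofReal_mul (by positivity)]
        congr 1
        rw [Real.Gamma_add_one (ne_of_gt hs), Real.Gamma_add_one (ne_of_gt (div_pos hs hν0))]
        field_simp

end aux

section aux2

lemma Gamma_convex_lb {ν : ℝ} (hν : ν ∈ Set.Ioo (0:ℝ) 1) {s : ℝ} (hs : 1 ≤ s) :
    s * Real.Gamma s ≤ Real.Gamma (s + ν) * (s + ν) ^ (1 - ν) := by
  obtain ⟨hν0, hν1⟩ := hν
  have hs0 : (0:ℝ) < s := by linarith
  have hsν : (0:ℝ) < s + ν := by linarith
  have h1 : s + 1 = ν * (s + ν) + (1 - ν) * (s + ν + 1) := by ring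
  have hconv := Real.convexOn_log_Gamma.2 (mem_Ioi.mpr hsν)
    (mem_Ioi.mpr (by linarith : (0:ℝ) < s + ν + 1)) hν0.le (by linarith : (0:ℝ) ≤ 1 - ν)
    (by ring)
  simp only [smul_eq_mul, Function.comp_apply] at hconv
  rw [← h1] at hconv
  have hΓ1 : 0 < Real.Gamma (s + ν) := Real.Gamma_pos_of_pos hsν
  have hΓ2 : Real.Gamma (s + ν + 1) = (s + ν) * Real.Gamma (s + ν) :=
    Real.Gamma_add_one (ne_of_gt hsν)
  have hΓ3 : Real.Gamma (s + 1) = s * Real.Gamma s := Real.Gamma_add_one (ne_of_gt hs0)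
  have hrhs : ν * Real.log (Real.Gamma (s + ν)) + (1 - ν) * Real.log (Real.Gamma (s + ν + 1))
      = Real.log (Real.Gamma (s + ν) * (s + ν) ^ (1 - ν)) := by
    rw [hΓ2, Real.log_mul (ne_of_gt hsν) (ne_of_gt hΓ1),
      Real.log_mul (ne_of_gt hΓ1) (by positivity : (s+ν) ^ (1-ν) ≠ 0),
      Real.log_rpow hsν]
    ring
  rw [hrhs, hΓ3] at hconv
  have hpos1 : 0 < s * Real.Gamma s := by positivity
  exact (Real.log_le_log_iff hpos1 (by positivity)).mp hconv

lemma ML_summable {ν : ℝ} (hν : ν ∈ Set.Ioo (0:ℝ) 1) {x₀ : ℝ} (hx : 0 < x₀) :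
    Summable (fun j : ℕ => (-x₀)^j / Real.Gamma (ν * j + 1)) := by
  obtain ⟨hν0, hν1⟩ := hν
  apply summable_of_ratio_norm_eventually_le (r := 1/2) (by norm_num)
  have htend : Tendsto (fun j : ℕ => (ν * j + 1) ^ ν) atTop atTop :=
    (tendsto_rpow_atTop hν0).comp (tendsto_atTop_add_const_right _ 1
      (tendsto_natCast_atTop_atTop.const_mul_atTop hν0))
  filter_upwards [htend.eventually_ge_atTop (4 * x₀)] with j hj
  set s : ℝ := ν * j + 1 with hsdef
  have hs1 : (1:ℝ) ≤ s := by
    have : (0:ℝ) ≤ ν * j := by positivity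
    simp only [hsdef]; linarith
  have hs0 : (0:ℝ) < s := by linarith
  have hsν : (0:ℝ) < s + ν := by linarith
  have hΓs : 0 < Real.Gamma s := Real.Gamma_pos_of_pos hs0
  have hΓsν : 0 < Real.Gamma (s + ν) := Real.Gamma_pos_of_pos hsν
  -- (s+ν)^(1-ν) ≤ 2 * s^(1-ν)
  have hb1 : (s + ν) ^ (1-ν) ≤ 2 * s ^ (1-ν) := by
    calc (s + ν) ^ (1-ν) ≤ (2*s) ^ (1-ν) :=
          Real.rpow_le_rpow hsν.le (by linarith) (by linarith)
      _ = 2 ^ (1-ν) * s ^ (1-ν) := Real.mul_rpow (by norm_num) hs0.le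
      _ ≤ 2 * s ^ (1-ν) := by
          have h2 : (2:ℝ) ^ (1-ν) ≤ 2 ^ (1:ℝ) :=
            Real.rpow_le_rpow_of_exponent_le one_le_two (by linarith)
          rw [Real.rpow_one] at h2
          have : (0:ℝ) ≤ s ^ (1-ν) := Real.rpow_nonneg hs0.le _
          nlinarith
  -- 2 x₀ (s+ν)^{1-ν} ≤ s
  have hkey : 2 * x₀ * (s + ν) ^ (1-ν) ≤ s := by
    have h4 : 4 * x₀ ≤ s ^ ν := hj
    have hsplit : s ^ ν * s ^ (1-ν) = s := by
      rw [← Real.rpow_add hs0]; norm_num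
    have hges : (0:ℝ) ≤ s ^ (1-ν) := Real.rpow_nonneg hs0.le _
    calc 2 * x₀ * (s + ν) ^ (1-ν) ≤ 2 * x₀ * (2 * s ^ (1-ν)) := by nlinarith
      _ = (4 * x₀) * s ^ (1-ν) := by ring
      _ ≤ s ^ ν * s ^ (1-ν) := by nlinarith
      _ = s := hsplit
  -- Γ(s+ν) ≥ 2 x₀ Γ(s)
  have hΓ : 2 * x₀ * Real.Gamma s ≤ Real.Gamma (s + ν) := by
    have hlb := Gamma_convex_lb ⟨hν0, hν1⟩ hs1
    have hp : (0:ℝ) < (s + ν) ^ (1-ν) := Real.rpow_pos_of_pos hsν _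
    nlinarith
  -- conclude ratio bound
  have hcast : ν * (j+1 : ℕ) + 1 = s + ν := by push_cast; ring
  rw [norm_div, norm_div, norm_pow, norm_pow, Real.norm_eq_abs, Real.norm_eq_abs,
    Real.norm_eq_abs, abs_neg, abs_of_pos hx, hcast, abs_of_pos hΓsν, abs_of_pos hΓs]
  rw [show 1/2 * (x₀ ^ j / Real.Gamma s) = (1/2 * x₀ ^ j) / Real.Gamma s by ring,
    div_le_div_iff₀ hΓsν hΓs, pow_succ]
  calc x₀ ^ j * x₀ * Real.Gamma s ≤ x₀ ^ j * (Real.Gamma (s + ν) / 2) := by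
        have : x₀ * Real.Gamma s ≤ Real.Gamma (s + ν) / 2 := by linarith
        have hxj : (0:ℝ) ≤ x₀ ^ j := by positivity
        nlinarith
    _ = 1/2 * x₀ ^ j * Real.Gamma (s + ν) := by ring

end aux2

/-- if `X ~ Exp(λ)` and `Z` is an independent ν-stable subordinator at time 1,
then `X^{1/ν} Z` is a Mittag-Leffler random variable with fractional index ν and parameter λ. -/
theorem stmt18 {Ω : Type*} [MeasurableSpace Ω] (P : Measure Ω) [IsProbabilityMeasure P]
    (ν lam : ℝ) (hν : ν ∈ Set.Ioo (0:ℝ) 1) (hl : 0 < lam)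
    (X Z : Ω → ℝ) (hX : Measurable X) (hZ : Measurable Z)
    (hXpos : ∀ ω, 0 ≤ X ω) (hZpos : ∀ ω, 0 ≤ Z ω)
    (hXexp : ∀ t, 0 ≤ t → P {ω | t < X ω} = ENNReal.ofReal (Real.exp (-lam * t)))
    (hZlap : ∀ v, 0 < v → ∫ ω, Real.exp (-v * Z ω) ∂P = Real.exp (-(v ^ ν)))
    (hindep : IndepFun X Z P) :
    ∀ t, 0 ≤ t →
      P {ω | t < X ω ^ (1 / ν) * Z ω} = ENNReal.ofReal (mittagLeffler ν (-lam * t ^ ν)) := by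
  obtain ⟨hν0, hν1⟩ := hν
  intro t ht
  have haeZ := Z_pos_ae P ν Z ⟨hν0, hν1⟩ hZ hZpos hZlap
  rcases eq_or_lt_of_le ht with rfl | ht'
  · -- case t = 0
    have h0 : (0:ℝ) ^ ν = 0 := Real.zero_rpow (ne_of_gt hν0)
    have hML : mittagLeffler ν (-lam * (0:ℝ) ^ ν) = 1 := by
      rw [h0, mul_zero]
      unfold mittagLeffler
      rw [tsum_eq_single 0 (fun j hj => by simp [zero_pow hj])]
      norm_num [Real.Gamma_one]
    rw [hML, ENNReal.ofReal_one]
    have hXm : MeasurableSet {ω | 0 < X ω} := measurableSet_lt measurable_const hX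
    have hZm : MeasurableSet {ω | 0 < Z ω} := measurableSet_lt measurable_const hZ
    have hX1 : P {ω | 0 < X ω} = 1 := by
      have := hXexp 0 le_rfl; simpa using this
    have hZ1 : P {ω | 0 < Z ω} = 1 := by
      rw [← prob_compl_eq_zero_iff hZm]
      have : {ω | 0 < Z ω}ᶜ = {ω | ¬ (0 < Z ω)} := rfl
      rw [this]
      exact haeZ
    have hsub : {ω | 0 < X ω} ∩ {ω | 0 < Z ω} ⊆ {ω | (0:ℝ) < X ω ^ (1/ν) * Z ω} := by
      rintro ω ⟨h1, h2⟩
      exact mul_pos (Real.rpow_pos_of_pos h1 _) h2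
    have hinter : P ({ω | 0 < X ω} ∩ {ω | 0 < Z ω}) = 1 := by
      rw [← prob_compl_eq_zero_iff (hXm.inter hZm), Set.compl_inter]
      have h1 : P {ω | 0 < X ω}ᶜ = 0 := (prob_compl_eq_zero_iff hXm).mpr hX1
      have h2 : P {ω | 0 < Z ω}ᶜ = 0 := (prob_compl_eq_zero_iff hZm).mpr hZ1
      refine le_antisymm (le_trans (measure_union_le _ _) ?_) zero_le
      rw [h1, h2, add_zero]
    refine le_antisymm prob_le_one ?_
    calc (1:ENNReal) = P ({ω | 0 < X ω} ∩ {ω | 0 < Z ω}) := hinter.symm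
      _ ≤ P {ω | (0:ℝ) < X ω ^ (1/ν) * Z ω} := measure_mono hsub
  · -- case 0 < t
    set x₀ : ℝ := lam * t ^ ν with hx₀def
    have hx₀ : 0 < x₀ := mul_pos hl (Real.rpow_pos_of_pos ht' ν)
    have hpairm : Measurable fun ω => (X ω, Z ω) := hX.prodMk hZ
    have hSm : MeasurableSet {p : ℝ × ℝ | t < p.1 ^ (1/ν) * p.2} := by
      apply measurableSet_lt measurable_const
      exact (by fun_prop : Measurable fun p : ℝ × ℝ => p.1 ^ (1/ν)).mul measurable_snd
    haveI : IsProbabilityMeasure (P.map X) := Measure.isProbabilityMeasure_map hX.aemeasurable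
    haveI : IsProbabilityMeasure (P.map Z) := Measure.isProbabilityMeasure_map hZ.aemeasurable
    have hmap := (ProbabilityTheory.indepFun_iff_map_prod_eq_prod_map_map
      hX.aemeasurable hZ.aemeasurable).mp hindep
    have hXtail : ∀ u : ℝ, 0 ≤ u →
        (P.map X) {x : ℝ | u < x} = ENNReal.ofReal (Real.exp (-lam * u)) := by
      intro u hu
      rw [show {x : ℝ | u < x} = Ioi u from rfl, Measure.map_apply hX measurableSet_Ioi]
      exact hXexp u hu
    have hXaePos : ∀ᵐ x ∂(P.map X), 0 ≤ x := by
      rw [ae_map_iff hX.aemeasurable (show MeasurableSet {x : ℝ | 0 ≤ x} from measurableSet_Ici)]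
      exact Filter.Eventually.of_forall hXpos
    -- Step A
    have hstepA : P {ω | t < X ω ^ (1/ν) * Z ω}
        = ∫⁻ ω, ENNReal.ofReal (Real.exp (-x₀ * Z ω ^ (-ν))) ∂P := by
      calc P {ω | t < X ω ^ (1/ν) * Z ω}
          = P.map (fun ω => (X ω, Z ω)) {p : ℝ×ℝ | t < p.1 ^ (1/ν) * p.2} := by
            rw [Measure.map_apply hpairm hSm]; rfl
        _ = ((P.map X).prod (P.map Z)) {p : ℝ×ℝ | t < p.1 ^ (1/ν) * p.2} := by rw [hmap]
        _ = ∫⁻ z, (P.map X) ((fun x => (x, z)) ⁻¹' {p : ℝ×ℝ | t < p.1 ^ (1/ν) * p.2})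
              ∂(P.map Z) := Measure.prod_apply_symm hSm
        _ = ∫⁻ ω, (P.map X) ((fun x => (x, Z ω)) ⁻¹' {p : ℝ×ℝ | t < p.1 ^ (1/ν) * p.2}) ∂P :=
            lintegral_map (measurable_measure_prodMk_right hSm) hZ
        _ = ∫⁻ ω, ENNReal.ofReal (Real.exp (-x₀ * Z ω ^ (-ν))) ∂P := by
            apply lintegral_congr_ae
            filter_upwards [haeZ] with ω hz
            have hsetae : ((fun x : ℝ => (x, Z ω)) ⁻¹' {p : ℝ×ℝ | t < p.1 ^ (1/ν) * p.2})
                =ᵐ[P.map X] {x : ℝ | (t / Z ω) ^ ν < x} := by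
              rw [Filter.eventuallyEq_set]
              filter_upwards [hXaePos] with x hx
              simp only [Set.mem_preimage, Set.mem_setOf_eq]
              have e1 : t < x ^ (1/ν) * Z ω ↔ t / Z ω < x ^ (1/ν) := (div_lt_iff₀ hz).symm
              have e2 : t / Z ω < x ^ (1/ν) ↔ (t / Z ω) ^ ν < (x ^ (1/ν)) ^ ν :=
                (Real.rpow_lt_rpow_iff (div_nonneg ht hz.le)
                  (Real.rpow_nonneg hx _) hν0).symm
              have e3 : (x ^ (1/ν)) ^ ν = x := by
                rw [← Real.rpow_mul hx, one_div, inv_mul_cancel₀ (ne_of_gt hν0), Real.rpow_one]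
              rw [e1, e2, e3]
            rw [measure_congr hsetae,
              hXtail _ (Real.rpow_nonneg (div_nonneg ht hz.le) ν)]
            congr 1
            rw [Real.div_rpow ht hz.le, Real.rpow_neg hz.le, div_eq_mul_inv]
            rw [hx₀def]; ring
    -- integrability of the limit integrand
    have hmeasexp : Measurable fun ω => Real.exp (-x₀ * Z ω ^ (-ν)) := by fun_prop
    have hIexp : Integrable (fun ω => Real.exp (-x₀ * Z ω ^ (-ν))) P := by
      apply Integrable.mono' (integrable_const (1:ℝ)) hmeasexp.aestronglyMeasurable
      filter_upwards with ω
      rw [Real.norm_eq_abs, abs_of_pos (Real.exp_pos _)]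
      apply Real.exp_le_one_iff.mpr
      have h1 : 0 ≤ Z ω ^ (-ν) := Real.rpow_nonneg (hZpos ω) _
      nlinarith
    set I : ℝ := ∫ ω, Real.exp (-x₀ * Z ω ^ (-ν)) ∂P with hIdef
    have hofReal : P {ω | t < X ω ^ (1/ν) * Z ω} = ENNReal.ofReal I := by
      rw [hstepA, ← ofReal_integral_eq_lintegral_ofReal hIexp
        (Filter.Eventually.of_forall fun ω => (Real.exp_pos _).le)]
    -- moments
    have hmom : ∀ j : ℕ, Integrable (fun ω => Z ω ^ (-(ν * (j:ℝ)))) P ∧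
        ∫ ω, Z ω ^ (-(ν * (j:ℝ))) ∂P
          = (Nat.factorial j : ℝ) / Real.Gamma (ν * (j:ℝ) + 1) := by
      intro j
      rcases Nat.eq_zero_or_pos j with rfl | hj
      · constructor
        · simp only [Nat.cast_zero, mul_zero, neg_zero, Real.rpow_zero]
          exact integrable_const 1
        · simp only [Nat.cast_zero, mul_zero, neg_zero, Real.rpow_zero, integral_const,
            measure_univ, ENNReal.toReal_one, smul_eq_mul, mul_one, Nat.factorial_zero,
            Nat.cast_one, zero_add, Real.Gamma_one]
          norm_num
      · have hjpos : (0:ℝ) < (j:ℝ) := by exact_mod_cast hj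
        have hs : 0 < ν * (j:ℝ) := mul_pos hν0 hjpos
        have hlin := moment_lintegral P ν Z ⟨hν0, hν1⟩ hZ hZpos hZlap _ hs
        rw [mul_div_cancel_left₀ _ (ne_of_gt hν0), Real.Gamma_nat_eq_factorial] at hlin
        have hmeasr : Measurable fun ω => Z ω ^ (-(ν * (j:ℝ))) := by fun_prop
        have hnn : 0 ≤ᵐ[P] fun ω => Z ω ^ (-(ν * (j:ℝ))) :=
          Filter.Eventually.of_forall fun ω => Real.rpow_nonneg (hZpos ω) _
        have hintg : Integrable (fun ω => Z ω ^ (-(ν * (j:ℝ)))) P := by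
          refine ⟨hmeasr.aestronglyMeasurable, ?_⟩
          rw [hasFiniteIntegral_iff_ofReal hnn, hlin]
          exact ENNReal.ofReal_lt_top
        refine ⟨hintg, ?_⟩
        rw [integral_eq_lintegral_of_nonneg_ae hnn hmeasr.aestronglyMeasurable, hlin,
          ENNReal.toReal_ofReal]
        have hΓ : 0 < Real.Gamma (ν * (j:ℝ) + 1) := Real.Gamma_pos_of_pos (by positivity)
        positivity
    have hpowid : ∀ (ω : Ω) (j : ℕ), (Z ω ^ (-ν)) ^ j = Z ω ^ (-(ν * (j:ℝ))) := by
      intro ω j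
      rw [← Real.rpow_natCast (Z ω ^ (-ν)) j, ← Real.rpow_mul (hZpos ω), neg_mul]
    have hsummable := ML_summable ⟨hν0, hν1⟩ hx₀
    set a : ℕ → ℝ := fun j => (-x₀)^j / Real.Gamma (ν * (j:ℝ) + 1) with hadef
    have hterm : ∀ j : ℕ,
        ∫ ω, (-x₀)^j * Z ω ^ (-(ν * (j:ℝ))) / (Nat.factorial j : ℝ) ∂P = a j := by
      intro j
      rw [integral_div, integral_const_mul, (hmom j).2]
      have hf0 : (Nat.factorial j : ℝ) ≠ 0 := Nat.cast_ne_zero.mpr (Nat.factorial_ne_zero j)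
      have hΓ : Real.Gamma (ν * (j:ℝ) + 1) ≠ 0 :=
        ne_of_gt (Real.Gamma_pos_of_pos (by positivity))
      simp only [hadef]
      field_simp
    have hintterm : ∀ j : ℕ,
        Integrable (fun ω => (-x₀)^j * Z ω ^ (-(ν * (j:ℝ))) / (Nat.factorial j : ℝ)) P :=
      fun j => ((hmom j).1.const_mul _).div_const _
    have hgint : ∀ n : ℕ, Integrable (fun ω => ∑ j ∈ Finset.range (n+1),
        (-x₀)^j * Z ω ^ (-(ν * (j:ℝ))) / (Nat.factorial j : ℝ)) P :=
      fun n => integrable_finset_sum _ (fun j _ => hintterm j)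
    have hpartial : ∀ n : ℕ, ∫ ω, (∑ j ∈ Finset.range (n+1),
        (-x₀)^j * Z ω ^ (-(ν * (j:ℝ))) / (Nat.factorial j : ℝ)) ∂P
        = ∑ j ∈ Finset.range (n+1), a j := by
      intro n
      rw [integral_finset_sum _ (fun j _ => hintterm j)]
      exact Finset.sum_congr rfl fun j _ => hterm j
    -- remainder bound
    have hrem : ∀ n : ℕ, |I - ∑ j ∈ Finset.range (n+1), a j|
        ≤ x₀^(n+1) / Real.Gamma (ν * ((n+1 : ℕ):ℝ) + 1) := by
      intro n
      rw [← hpartial n, ← integral_sub hIexp (hgint n)]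
      have hbint : Integrable (fun ω =>
          x₀^(n+1) * Z ω ^ (-(ν * ((n+1:ℕ):ℝ))) / (Nat.factorial (n+1) : ℝ)) P :=
        ((hmom (n+1)).1.const_mul _).div_const _
      have hptw : ∀ ω, |Real.exp (-x₀ * Z ω ^ (-ν)) - ∑ j ∈ Finset.range (n+1),
          (-x₀)^j * Z ω ^ (-(ν * (j:ℝ))) / (Nat.factorial j : ℝ)|
          ≤ x₀^(n+1) * Z ω ^ (-(ν * ((n+1:ℕ):ℝ))) / (Nat.factorial (n+1) : ℝ) := by
        intro ω
        set y : ℝ := x₀ * Z ω ^ (-ν) with hydef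
        have hy : 0 ≤ y := mul_nonneg hx₀.le (Real.rpow_nonneg (hZpos ω) _)
        have hR := expRemainder n y hy
        have hsumeq : ∑ j ∈ Finset.range (n+1), (-y)^j / (Nat.factorial j : ℝ)
            = ∑ j ∈ Finset.range (n+1),
              (-x₀)^j * Z ω ^ (-(ν * (j:ℝ))) / (Nat.factorial j : ℝ) := by
          refine Finset.sum_congr rfl fun j _ => ?_
          rw [show -y = (-x₀) * Z ω ^ (-ν) by rw [hydef]; ring, mul_pow, hpowid ω j]
        have hexpeq : Real.exp (-x₀ * Z ω ^ (-ν)) = Real.exp (-y) := by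
          rw [hydef]; ring_nf
        have hboundeq : y^(n+1) / (Nat.factorial (n+1) : ℝ)
            = x₀^(n+1) * Z ω ^ (-(ν * ((n+1:ℕ):ℝ))) / (Nat.factorial (n+1) : ℝ) := by
          rw [hydef, mul_pow, hpowid ω (n+1)]
        rw [hexpeq, ← hsumeq, ← hboundeq]
        exact hR
      calc |∫ ω, (Real.exp (-x₀ * Z ω ^ (-ν)) - ∑ j ∈ Finset.range (n+1),
              (-x₀)^j * Z ω ^ (-(ν * (j:ℝ))) / (Nat.factorial j : ℝ)) ∂P|
          ≤ ∫ ω, |Real.exp (-x₀ * Z ω ^ (-ν)) - ∑ j ∈ Finset.range (n+1),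
              (-x₀)^j * Z ω ^ (-(ν * (j:ℝ))) / (Nat.factorial j : ℝ)| ∂P := by
            have h1 := norm_integral_le_integral_norm (μ := P)
              (f := fun ω => Real.exp (-x₀ * Z ω ^ (-ν)) - ∑ j ∈ Finset.range (n+1),
                (-x₀)^j * Z ω ^ (-(ν * (j:ℝ))) / (Nat.factorial j : ℝ))
            simpa [Real.norm_eq_abs] using h1
        _ ≤ ∫ ω, x₀^(n+1) * Z ω ^ (-(ν * ((n+1:ℕ):ℝ))) / (Nat.factorial (n+1) : ℝ) ∂P :=
            integral_mono ((hIexp.sub (hgint n)).abs) hbint (fun ω => hptw ω)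
        _ = x₀^(n+1) / Real.Gamma (ν * ((n+1:ℕ):ℝ) + 1) := by
            rw [integral_div, integral_const_mul, (hmom (n+1)).2]
            have hf0 : (Nat.factorial (n+1) : ℝ) ≠ 0 :=
              Nat.cast_ne_zero.mpr (Nat.factorial_ne_zero _)
            have hΓ : Real.Gamma (ν * ((n+1:ℕ):ℝ) + 1) ≠ 0 :=
              ne_of_gt (Real.Gamma_pos_of_pos (by positivity))
            field_simp
    -- limits and conclusion
    have htendsML : Filter.Tendsto (fun n : ℕ => ∑ j ∈ Finset.range (n+1), a j) Filter.atTop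
        (𝓝 (mittagLeffler ν (-lam * t ^ ν))) := by
      have h1 : mittagLeffler ν (-lam * t ^ ν) = ∑' j, a j := by
        unfold mittagLeffler
        rw [hadef]
        congr 1
        funext j
        rw [hx₀def, neg_mul]
      rw [h1]
      exact hsummable.hasSum.tendsto_sum_nat.comp (tendsto_add_atTop_nat 1)
    have habs0 : Filter.Tendsto (fun n : ℕ => x₀^(n+1) / Real.Gamma (ν * ((n+1:ℕ):ℝ) + 1))
        Filter.atTop (𝓝 0) := by
      have h1 := hsummable.tendsto_atTop_zero
      have h2 := (h1.comp (tendsto_add_atTop_nat 1)).abs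
      rw [abs_zero] at h2
      refine h2.congr fun n => ?_
      have hΓ : 0 < Real.Gamma (ν * ((n+1:ℕ):ℝ) + 1) := Real.Gamma_pos_of_pos (by positivity)
      simp only [Function.comp_apply, hadef, abs_div, abs_pow, abs_neg, abs_of_pos hx₀,
        abs_of_pos hΓ]
    have hlimI : Filter.Tendsto (fun n : ℕ => ∑ j ∈ Finset.range (n+1), a j)
        Filter.atTop (𝓝 I) := by
      rw [tendsto_iff_dist_tendsto_zero]
      refine squeeze_zero (fun n => dist_nonneg) (fun n => ?_) habs0
      rw [Real.dist_eq, abs_sub_comm]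
      exact hrem n
    rw [hofReal, tendsto_nhds_unique hlimI htendsML]
end
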